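/- Let T > 0, x_0 > 0, γ > 0, and let r, β : [0,T] → ℝ be continuous. Define f₁(t) = (β(t) − (1−γ)r(t))/γ and B_{f₁}(t) = ∫_t^T exp(−∫_t^u f₁(s) ds) du. Suppose X : [0,T) → ℝ satisfies X(0) = x_0 and X′(t) = X(t)r(t) − c(t) on (0,T), where c(t) = X(t)/B_{f₁}(t) for t ∈ [0,T). Then c is differentiable on (0,T) with c′(t) = c(t)·(r(t) − β(t))/γ, hence c(t) = (x_0/B_{f₁}(0))·exp(∫_0^t (r(s)−β(s))/γ ds) for t ∈ [0,T), and the limit c(T) := lim_{t→T⁻} c(t) exists and lies in (0,∞). -/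

import Mathlib

open Set Filter intervalIntegral

/-- The annuity value `B_f(t) = ∫_t^T exp(−∫_t^u f(s) ds) du`. -/
noncomputable def Bann (T : ℝ) (f : ℝ → ℝ) (t : ℝ) : ℝ :=
  ∫ u in t..T, Real.exp (-∫ s in t..u, f s)

/-- The rate `f₁(t) = (β(t) − (1−γ)r(t))/γ` determining the optimal
wealth-to-consumption factor of a CRRA utility maximizer. -/
noncomputable def fOne (γ : ℝ) (r β : ℝ → ℝ) : ℝ → ℝ :=
  fun t => (β t - (1 - γ) * r t) / γ

/-- In the model with deterministic interest rate `r` and no risky assets, the optimal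
CRRA consumption stream `c(t) = X(t)/B_{f₁}(t)` satisfies
`c′(t) = c(t)(r(t) − β(t))/γ`, hence
`c(t) = (x₀/B_{f₁}(0))·exp(∫_0^t (r(s)−β(s))/γ ds)` on `[0,T)`, and
`c(T) := lim_{t→T⁻} c(t)` exists in `(0,∞)`. -/
theorem crra_consumption_dynamics (T : ℝ) (hT : 0 < T)
    (x₀ : ℝ) (hx₀ : 0 < x₀) (γ : ℝ) (hγ : 0 < γ)
    (r β : ℝ → ℝ) (hr : ContinuousOn r (Icc 0 T)) (hβ : ContinuousOn β (Icc 0 T))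
    (X c : ℝ → ℝ)
    (hX_cont : ContinuousOn X (Ico 0 T)) (hX0 : X 0 = x₀)
    (hc_def : ∀ t ∈ Ico (0 : ℝ) T, c t = X t / Bann T (fOne γ r β) t)
    (hX_ode : ∀ t ∈ Ioo (0 : ℝ) T, HasDerivAt X (X t * r t - c t) t) :
    (∀ t ∈ Ioo (0 : ℝ) T, HasDerivAt c (c t * (r t - β t) / γ) t) ∧
    (∀ t ∈ Ico (0 : ℝ) T,
      c t = x₀ / Bann T (fOne γ r β) 0
        * Real.exp (∫ s in (0 : ℝ)..t, (r s - β s) / γ)) ∧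
    (∃ L : ℝ, 0 < L ∧ Tendsto c (nhdsWithin T (Iio T)) (nhds L)) := by
  have hγ' : γ ≠ 0 := ne_of_gt hγ
  -- a continuous projection onto `[0,T]`
  set π : ℝ → ℝ := fun t => min (max t 0) T with hπdef
  have hπcont : Continuous π := by fun_prop
  have hπmem : ∀ t, π t ∈ Icc (0 : ℝ) T := fun t =>
    ⟨le_min (le_max_right _ _) hT.le, min_le_right _ _⟩
  have hπeq : ∀ t ∈ Icc (0 : ℝ) T, π t = t := by
    intro t ht
    simp only [hπdef]
    rw [max_eq_left ht.1, min_eq_left ht.2]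
  -- continuous extensions of `r` and `β`
  set rE : ℝ → ℝ := fun t => r (π t) with hrEdef
  set βE : ℝ → ℝ := fun t => β (π t) with hβEdef
  have hrE : Continuous rE := hr.comp_continuous hπcont hπmem
  have hβE : Continuous βE := hβ.comp_continuous hπcont hπmem
  have hrE_eq : ∀ t ∈ Icc (0 : ℝ) T, rE t = r t := fun t ht => by
    simp only [hrEdef]; rw [hπeq t ht]
  have hβE_eq : ∀ t ∈ Icc (0 : ℝ) T, βE t = β t := fun t ht => by
    simp only [hβEdef]; rw [hπeq t ht]
  set f1 : ℝ → ℝ := fOne γ r β with hf1def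
  set fE : ℝ → ℝ := fun t => (βE t - (1 - γ) * rE t) / γ with hfEdef
  have hfE : Continuous fE := by fun_prop
  have hfE_eq : ∀ t ∈ Icc (0 : ℝ) T, fE t = f1 t := by
    intro t ht
    simp only [hfEdef, hf1def, fOne, hrE_eq t ht, hβE_eq t ht]
  -- the primitive of `fE`
  set F : ℝ → ℝ := fun t => ∫ s in (0 : ℝ)..t, fE s with hFdef
  have hF : ∀ t, HasDerivAt F (fE t) t := fun t =>
    intervalIntegral.integral_hasDerivAt_right (hfE.intervalIntegrable 0 t)
      (hfE.stronglyMeasurableAtFilter _ _) hfE.continuousAt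
  have hFc : Continuous F := by
    have : Differentiable ℝ F := fun t => (hF t).differentiableAt
    exact this.continuous
  set g : ℝ → ℝ := fun u => Real.exp (-(F u)) with hgdef
  have hgc : Continuous g := by fun_prop
  have hgpos : ∀ u, 0 < g u := fun u => Real.exp_pos _
  set G : ℝ → ℝ := fun t => ∫ u in t..T, g u with hGdef
  have hG : ∀ t, HasDerivAt G (-(g t)) t := fun t =>
    intervalIntegral.integral_hasDerivAt_left (hgc.intervalIntegrable t T)
      (hgc.stronglyMeasurableAtFilter _ _) hgc.continuousAt
  have hGc : Continuous G := by
    have : Differentiable ℝ G := fun t => (hG t).differentiableAt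
    exact this.continuous
  set B : ℝ → ℝ := fun t => Real.exp (F t) * G t with hBdef
  have hBc : Continuous B := by fun_prop
  have hBpos : ∀ t ∈ Ico (0 : ℝ) T, 0 < B t := by
    intro t ht
    exact mul_pos (Real.exp_pos _)
      (intervalIntegral_pos_of_pos (hgc.intervalIntegrable t T) hgpos ht.2)
  -- the annuity equals `B` on `[0,T]`
  have hBann : ∀ t ∈ Icc (0 : ℝ) T, Bann T f1 t = B t := by
    intro t ht
    have key : ∀ u ∈ uIcc t T, Real.exp (-∫ s in t..u, f1 s) = Real.exp (F t) * g u := by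
      intro u hu
      rw [uIcc_of_le ht.2] at hu
      have huT : u ∈ Icc (0 : ℝ) T := ⟨ht.1.trans hu.1, hu.2⟩
      have h1 : (∫ s in t..u, f1 s) = ∫ s in t..u, fE s := by
        apply intervalIntegral.integral_congr
        intro s hs
        rw [uIcc_of_le hu.1] at hs
        exact (hfE_eq s ⟨ht.1.trans hs.1, hs.2.trans hu.2⟩).symm
      have h2 : (∫ s in t..u, fE s) = F u - F t := by
        rw [hFdef]
        exact (intervalIntegral.integral_interval_sub_left
          (hfE.intervalIntegrable 0 u) (hfE.intervalIntegrable 0 t)).symm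
      rw [h1, h2, hgdef]
      rw [show -(F u - F t) = F t + -(F u) by ring, Real.exp_add]
    calc Bann T f1 t = ∫ u in t..T, Real.exp (F t) * g u :=
          intervalIntegral.integral_congr key
      _ = Real.exp (F t) * ∫ u in t..T, g u := intervalIntegral.integral_const_mul _ _
      _ = B t := rfl
  -- derivative of `B`
  have hB : ∀ t, HasDerivAt B (fE t * B t - 1) t := by
    intro t
    have h1 : HasDerivAt (fun u => Real.exp (F u)) (Real.exp (F t) * fE t) t := (hF t).exp
    have h2 := h1.mul (hG t)
    refine h2.congr_deriv ?_
    have hinv : Real.exp (F t) * g t = 1 := by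
      rw [hgdef, ← Real.exp_add]; simp
    simp only [hBdef]
    linear_combination -hinv
  -- c agrees with X/B near interior points
  have hc_eqB : ∀ t ∈ Ico (0 : ℝ) T, c t = X t / B t := by
    intro t ht
    rw [hc_def t ht, hBann t (Ico_subset_Icc_self ht)]
  -- Part 1: derivative of c
  have hc_deriv : ∀ t ∈ Ioo (0 : ℝ) T, HasDerivAt c (c t * (r t - β t) / γ) t := by
    intro t ht
    have htIcc : t ∈ Icc (0 : ℝ) T := ⟨ht.1.le, ht.2.le⟩
    have hBne : B t ≠ 0 := ne_of_gt (hBpos t ⟨ht.1.le, ht.2⟩)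
    have hdiv : HasDerivAt (fun u => X u / B u)
        (((X t * r t - c t) * B t - X t * (fE t * B t - 1)) / (B t) ^ 2) t :=
      (hX_ode t ht).div (hB t) hBne
    have hev : (fun u => X u / B u) =ᶠ[nhds t] c := by
      have hmem : Ioo (0 : ℝ) T ∈ nhds t := isOpen_Ioo.mem_nhds ht
      filter_upwards [hmem] with u hu
      exact (hc_eqB u ⟨hu.1.le, hu.2⟩).symm
    have hd2 : HasDerivAt c
        (((X t * r t - c t) * B t - X t * (fE t * B t - 1)) / (B t) ^ 2) t :=
      hdiv.congr_of_eventuallyEq hev.symm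
    have hval : ((X t * r t - c t) * B t - X t * (fE t * B t - 1)) / (B t) ^ 2
        = c t * (r t - β t) / γ := by
      rw [hc_eqB t ⟨ht.1.le, ht.2⟩, hfE_eq t htIcc, hf1def]
      unfold fOne
      field_simp
      ring
    rwa [hval] at hd2
  refine ⟨hc_deriv, ?_⟩
  -- the exponential factor
  set hE : ℝ → ℝ := fun s => (rE s - βE s) / γ with hEdef
  have hhE : Continuous hE := by fun_prop
  set H : ℝ → ℝ := fun t => ∫ s in (0 : ℝ)..t, hE s with hHdef
  have hH : ∀ t, HasDerivAt H (hE t) t := fun t =>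
    intervalIntegral.integral_hasDerivAt_right (hhE.intervalIntegrable 0 t)
      (hhE.stronglyMeasurableAtFilter _ _) hhE.continuousAt
  have hHc : Continuous H := by
    have : Differentiable ℝ H := fun t => (hH t).differentiableAt
    exact this.continuous
  have hH_eq : ∀ t ∈ Icc (0 : ℝ) T, H t = ∫ s in (0 : ℝ)..t, (r s - β s) / γ := by
    intro t ht
    apply intervalIntegral.integral_congr
    intro s hs
    rw [uIcc_of_le ht.1] at hs
    have hsIcc : s ∈ Icc (0 : ℝ) T := ⟨hs.1, hs.2.trans ht.2⟩
    simp only [hEdef, hrE_eq s hsIcc, hβE_eq s hsIcc]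
  -- φ = c · exp(−H) is locally constant on (0,T)
  set φ : ℝ → ℝ := fun t => c t * Real.exp (-(H t)) with hφdef
  have hφ' : ∀ t ∈ Ioo (0 : ℝ) T, HasDerivAt φ 0 t := by
    intro t ht
    have htIcc : t ∈ Icc (0 : ℝ) T := ⟨ht.1.le, ht.2.le⟩
    have h1 := (hc_deriv t ht).mul ((hH t).neg.exp)
    have : c t * (r t - β t) / γ * Real.exp (-(H t))
        + c t * (Real.exp (-(H t)) * -(hE t)) = 0 := by
      simp only [hEdef, hrE_eq t htIcc, hβE_eq t htIcc]
      field_simp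
      ring
    simp only [Pi.neg_apply] at h1
    rwa [this] at h1
  -- c is continuous on [0,T)
  have hc_cont : ContinuousOn c (Ico 0 T) := by
    have h1 : ContinuousOn (fun t => X t / B t) (Ico 0 T) :=
      hX_cont.div hBc.continuousOn (fun t ht => ne_of_gt (hBpos t ht))
    exact ContinuousOn.congr h1 hc_eqB
  have hφ_cont : ContinuousOn φ (Ico 0 T) := by
    apply hc_cont.mul
    exact (Continuous.continuousOn (by fun_prop))
  -- φ is constant on [s,t] for 0 < s ≤ t < T
  have hφ_const : ∀ s t : ℝ, 0 < s → s ≤ t → t < T → φ t = φ s := by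
    intro s t hs hst htT
    have := constant_of_has_deriv_right_zero
      (f := φ) (a := s) (b := t)
      (fun x hx => ((hφ' x ⟨hs.trans_le hx.1, lt_of_le_of_lt hx.2 htT⟩
        ).continuousAt).continuousWithinAt)
      (fun x hx => (hφ' x ⟨hs.trans_le hx.1, hx.2.trans htT⟩).hasDerivWithinAt)
    exact this t ⟨hst, le_rfl⟩
  -- φ equals φ 0 on [0,T)
  have hφ0 : ∀ t ∈ Ico (0 : ℝ) T, φ t = φ 0 := by
    intro t ht
    rcases eq_or_lt_of_le ht.1 with h0 | h0
    · rw [← h0]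
    · -- take a limit from the right at 0
      have hne : (nhdsWithin (0 : ℝ) (Ioo 0 t)).NeBot := left_nhdsWithin_Ioo_neBot h0
      have h1 : Tendsto φ (nhdsWithin 0 (Ioo 0 t)) (nhds (φ 0)) := by
        have := (hφ_cont 0 ⟨le_refl 0, hT⟩)
        exact this.mono_left (nhdsWithin_mono _
          (fun x hx => ⟨hx.1.le, hx.2.trans ht.2⟩))
      have h2 : Tendsto φ (nhdsWithin 0 (Ioo 0 t)) (nhds (φ t)) := by
        apply Tendsto.congr' _ tendsto_const_nhds
        filter_upwards [self_mem_nhdsWithin] with s hs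
        exact hφ_const s t hs.1 hs.2.le ht.2
      exact tendsto_nhds_unique h2 h1
  -- the explicit formula
  have hB0pos : 0 < Bann T f1 0 := by
    rw [hBann 0 ⟨le_refl 0, hT.le⟩]
    exact hBpos 0 ⟨le_refl 0, hT⟩
  have hc0 : c 0 = x₀ / Bann T f1 0 := by
    rw [hc_def 0 ⟨le_refl 0, hT⟩, hX0]
  have hH0 : H 0 = 0 := by simp [hHdef]
  have hform : ∀ t ∈ Ico (0 : ℝ) T, c t = x₀ / Bann T f1 0 * Real.exp (H t) := by
    intro t ht
    have h1 : φ t = φ 0 := hφ0 t ht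
    have h2 : φ 0 = c 0 := by simp [hφdef, hH0]
    have h3 : c t = φ t * Real.exp (H t) := by
      rw [hφdef]
      simp only
      rw [mul_assoc, ← Real.exp_add]
      simp
    rw [h3, h1, h2, hc0]
  refine ⟨?_, ?_⟩
  · intro t ht
    rw [hform t ht, hH_eq t (Ico_subset_Icc_self ht)]
  · -- the limit at T
    refine ⟨x₀ / Bann T f1 0 * Real.exp (H T), ?_, ?_⟩
    · exact mul_pos (div_pos hx₀ hB0pos) (Real.exp_pos _)
    · have h1 : Tendsto (fun t => x₀ / Bann T f1 0 * Real.exp (H t))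
          (nhdsWithin T (Iio T)) (nhds (x₀ / Bann T f1 0 * Real.exp (H T))) := by
        apply Tendsto.mono_left _ nhdsWithin_le_nhds
        exact (Continuous.tendsto (by fun_prop) T)
      apply h1.congr'
      filter_upwards [Ioo_mem_nhdsLT_of_mem (⟨hT, le_refl T⟩ : T ∈ Ioc 0 T)] with t ht
      exact (hform t ⟨ht.1.le, ht.2⟩).symm
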